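/- Let 1 ≤ p < ∞ and let B_w be the weighted backward shift on ℓ_p(ℤ₊) associated with a weight sequence w = (w_n)_{n≥1}. Then B_w admits an invariant Borel probability measure different from the Dirac mass δ₀ at the origin if and only if ∑_{n=1}^∞ 1/|w₁⋯w_n|^p < ∞. -/

import Mathlib

open MeasureTheory Filter
open scoped ENNReal NNReal

noncomputable instance {𝕂 : Type*} [RCLike 𝕂] {p : ℝ≥0∞} [Fact (1 ≤ p)] :
    MeasurableSpace (lp (fun _ : ℕ => 𝕂) p) := borel _

instance {𝕂 : Type*} [RCLike 𝕂] {p : ℝ≥0∞} [Fact (1 ≤ p)] :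
    BorelSpace (lp (fun _ : ℕ => 𝕂) p) := ⟨rfl⟩

private lemma icc_one_eq_ioc (a n : ℕ) : Finset.Icc (a + 1) n = Finset.Ioc a n := by
  ext i
  simp only [Finset.mem_Icc, Finset.mem_Ioc]
  omega

set_option maxHeartbeats 1000000 in
set_option synthInstance.maxHeartbeats 400000 in
/-- A weighted backward shift `B_w` on `ℓ_p(ℤ₊)` admits an invariant Borel
probability measure different from the Dirac mass at `0` if and only if
`∑_{n≥1} 1/|w₁⋯w_n|^p < ∞`. -/
theorem weighted_shift_exists_nontrivial_invariant_measure_iff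
    {𝕂 : Type*} [RCLike 𝕂] (p : ℝ≥0∞) [Fact (1 ≤ p)] (hp : p ≠ ⊤)
    (w : ℕ → 𝕂) (hw0 : ∀ n, 1 ≤ n → w n ≠ 0)
    (hwbdd : ∃ M : ℝ, ∀ n, ‖w n‖ ≤ M)
    (B : lp (fun _ : ℕ => 𝕂) p →L[𝕂] lp (fun _ : ℕ => 𝕂) p)
    (hB : ∀ (x : lp (fun _ : ℕ => 𝕂) p) (n : ℕ),
        (B x : ∀ _ : ℕ, 𝕂) n = w (n + 1) * (x : ∀ _ : ℕ, 𝕂) (n + 1)) :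
    (∃ m : Measure (lp (fun _ : ℕ => 𝕂) p), IsProbabilityMeasure m ∧
        (∀ A : Set (lp (fun _ : ℕ => 𝕂) p), MeasurableSet A → m (B ⁻¹' A) = m A) ∧
        m ≠ Measure.dirac 0) ↔
      Summable (fun n : ℕ =>
        (1 : ℝ) / ‖∏ i ∈ Finset.Icc 1 (n + 1), w i‖ ^ p.toReal) := by
  classical
  set X := lp (fun _ : ℕ => 𝕂) p with hXdef
  have hfact : (1 : ℝ≥0∞) ≤ p := Fact.out
  have hp0 : p ≠ 0 := by
    intro h
    rw [h] at hfact
    exact absurd hfact (by simp)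
  have hq0 : 0 < p.toReal := ENNReal.toReal_pos hp0 hp
  set q := p.toReal with hqdef
  have hq0' : (0 : ℝ) ≤ q := hq0.le
  have hprod_ne : ∀ n : ℕ, (∏ i ∈ Finset.Icc 1 n, w i) ≠ 0 := by
    intro n
    refine Finset.prod_ne_zero_iff.mpr fun i hi => hw0 i (Finset.mem_Icc.mp hi).1
  have hβpos : ∀ n : ℕ, (0 : ℝ) < ‖∏ i ∈ Finset.Icc 1 n, w i‖ :=
    fun n => norm_pos_iff.mpr (hprod_ne n)
  have hBmeas : Measurable (⇑B : X → X) := B.continuous.measurable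
  have hcoordcont : ∀ j : ℕ, Continuous fun x : X => (x : ∀ _ : ℕ, 𝕂) j := by
    intro j
    refine (LipschitzWith.of_dist_le_mul (K := 1) fun x y => ?_).continuous
    rw [NNReal.coe_one, one_mul, dist_eq_norm, dist_eq_norm]
    have hxy : (x : ∀ _ : ℕ, 𝕂) j - (y : ∀ _ : ℕ, 𝕂) j = ((x - y : X) : ∀ _ : ℕ, 𝕂) j := by
      rw [lp.coeFn_sub]; rfl
    rw [hxy]
    exact lp.norm_apply_le_norm hp0 _ j
  have hopen : ∀ (j : ℕ) (ε : ℝ), IsOpen {x : X | ε < ‖(x : ∀ _ : ℕ, 𝕂) j‖} :=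
    fun j ε => isOpen_lt continuous_const (hcoordcont j).norm
  constructor
  · -- hard direction
    rintro ⟨m, hprob, hinv, hne⟩
    -- iterated invariance
    have hinvk : ∀ (k : ℕ) (A : Set X), MeasurableSet A → m ((⇑B)^[k] ⁻¹' A) = m A := by
      intro k
      induction k with
      | zero => intro A hA; simp
      | succ k ih =>
        intro A hA
        rw [Function.iterate_succ, Set.preimage_comp, hinv _ ((hBmeas.iterate k) hA)]
        exact ih A hA
    -- m is not concentrated at 0
    have hms0 : MeasurableSet ({(0 : X)} : Set X) := isClosed_singleton.measurableSet
    have hnz : m ({(0 : X)}ᶜ) ≠ 0 := by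
      intro h0
      apply hne
      have hm0 : m ({(0 : X)}) = 1 := by
        have h := measure_add_measure_compl (μ := m) hms0
        rw [h0, add_zero, measure_univ] at h
        exact h
      refine Measure.ext fun A hA => ?_
      have hsplit : m (A ∩ {(0 : X)}) + m (A \ {(0 : X)}) = m A :=
        measure_inter_add_diff A hms0
      have hdiff : m (A \ {(0 : X)}) = 0 :=
        measure_mono_null (fun z hz => hz.2) h0
      rw [Measure.dirac_apply' _ hA, Set.indicator_apply]
      by_cases h0A : (0 : X) ∈ A
      · rw [if_pos h0A, ← hsplit, Set.inter_eq_self_of_subset_right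
          (Set.singleton_subset_iff.mpr h0A), hm0, hdiff, add_zero, Pi.one_apply]
      · rw [if_neg h0A, ← hsplit, Set.inter_singleton_eq_empty.mpr h0A,
          measure_empty, hdiff, add_zero]
    -- find a coordinate with positive mass away from 0
    have hex : ∃ (j i : ℕ), m {x : X | 1 / ((i : ℝ) + 1) < ‖(x : ∀ _ : ℕ, 𝕂) j‖} ≠ 0 := by
      by_contra hcon
      push_neg at hcon
      apply hnz
      refine measure_mono_null (fun x hx => ?_)
        (measure_iUnion_null fun j => measure_iUnion_null fun i => hcon j i)
      have hx0 : x ≠ 0 := hx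
      have hxj : ∃ j, (x : ∀ _ : ℕ, 𝕂) j ≠ 0 := by
        by_contra hc
        push_neg at hc
        exact hx0 (lp.eq_zero_iff_coeFn_eq_zero.mpr (funext fun n => hc n))
      obtain ⟨j, hj⟩ := hxj
      obtain ⟨i, hi⟩ := exists_nat_one_div_lt (norm_pos_iff.mpr hj)
      exact Set.mem_iUnion.mpr ⟨j, Set.mem_iUnion.mpr ⟨i, hi⟩⟩
    obtain ⟨j, i, hc⟩ := hex
    set ε : ℝ := 1 / ((i : ℝ) + 1) with hεdef
    have hε : 0 < ε := by positivity
    set c : ℝ≥0∞ := m {x : X | ε < ‖(x : ∀ _ : ℕ, 𝕂) j‖} with hcdef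
    -- coordinates of iterates of B
    have hBk : ∀ (k : ℕ) (x : X) (n : ℕ),
        ((⇑B)^[k] x : ∀ _ : ℕ, 𝕂) n
          = (∏ i ∈ Finset.Icc (n + 1) (n + k), w i) * (x : ∀ _ : ℕ, 𝕂) (n + k) := by
      intro k
      induction k with
      | zero =>
        intro x n
        simp [Finset.Icc_eq_empty (show ¬ n + 1 ≤ n + 0 by omega)]
      | succ k ih =>
        intro x n
        rw [Function.iterate_succ_apply, ih (B x) n, hB x (n + k),
          show n + (k + 1) = n + k + 1 from rfl,
          Finset.prod_Icc_succ_top (show n + 1 ≤ n + k + 1 by omega)]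
        ring
    -- the shifted weight products
    set b : ℕ → ℝ := fun k => ‖∏ i ∈ Finset.Icc (j + 1) (j + k), w i‖ with hbdef
    have hbpos : ∀ k, 0 < b k := by
      intro k
      refine norm_pos_iff.mpr (Finset.prod_ne_zero_iff.mpr fun i hi => ?_)
      exact hw0 i (le_trans (by omega) (Finset.mem_Icc.mp hi).1)
    -- the key sets
    set E : ℕ → Set X := fun k => {x : X | ε / b k < ‖(x : ∀ _ : ℕ, 𝕂) (j + k)‖} with hEdef
    have hEopen : ∀ k, IsOpen (E k) := fun k => hopen (j + k) (ε / b k)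
    have hmeasE : ∀ k, m (E k) = c := by
      intro k
      have hpre : (⇑B)^[k] ⁻¹' {x : X | ε < ‖(x : ∀ _ : ℕ, 𝕂) j‖} = E k := by
        ext x
        simp only [Set.mem_preimage, Set.mem_setOf_eq, hEdef]
        show ε < ‖((⇑B)^[k] x : ∀ _ : ℕ, 𝕂) j‖ ↔ ε / b k < ‖(x : ∀ _ : ℕ, 𝕂) (j + k)‖
        rw [hBk k x j, norm_mul, div_lt_iff₀ (hbpos k), mul_comm]
      rw [← hpre, hinvk k _ (hopen j ε).measurableSet]
  -- choose a big ball capturing most of the mass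
    have hcpos : (0 : ℝ≥0∞) < c := pos_iff_ne_zero.mpr hc
    have hKex : ∃ R : ℕ, m {x : X | (R : ℝ) < ‖x‖} < c := by
      have hmono : Antitone fun R : ℕ => {x : X | (R : ℝ) < ‖x‖} := by
        intro a bb hab x hx
        simp only [Set.mem_setOf_eq] at hx ⊢
        exact lt_of_le_of_lt (by exact_mod_cast hab) hx
      have hinter : (⋂ R : ℕ, {x : X | (R : ℝ) < ‖x‖}) = ∅ := by
        ext x
        simp only [Set.mem_iInter, Set.mem_setOf_eq, Set.mem_empty_iff_false, iff_false,
          not_forall, not_lt]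
        obtain ⟨R, hR⟩ := exists_nat_gt ‖x‖
        exact ⟨R, hR.le⟩
      have htend := tendsto_measure_iInter_atTop (μ := m)
        (fun R => (isOpen_lt continuous_const continuous_norm).measurableSet.nullMeasurableSet)
        hmono ⟨0, measure_ne_top m _⟩
      rw [hinter, measure_empty] at htend
      exact (htend.eventually_lt_const hcpos).exists
    obtain ⟨R, hR⟩ := hKex
    set K : Set X := {x : X | ‖x‖ ≤ (R : ℝ)} with hKdef
    have hKmeas : MeasurableSet K := (isClosed_le continuous_norm continuous_const).measurableSet
    set δ : ℝ≥0∞ := c - m {x : X | (R : ℝ) < ‖x‖} with hδdef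
    have hδpos : 0 < δ := tsub_pos_of_lt hR
    have hδle : ∀ k, δ ≤ m (E k ∩ K) := by
      intro k
      have hsub : E k ⊆ (E k ∩ K) ∪ {x : X | (R : ℝ) < ‖x‖} := by
        intro x hx
        by_cases hxK : x ∈ K
        · exact Or.inl ⟨hx, hxK⟩
        · have hxK' : ¬ ‖x‖ ≤ (R : ℝ) := hxK
          exact Or.inr (show (R : ℝ) < ‖x‖ from not_le.mp hxK')
      have h2 : m (E k) ≤ m (E k ∩ K) + m {x : X | (R : ℝ) < ‖x‖} :=
        (measure_mono hsub).trans
          (measure_union_le (μ := m) (E k ∩ K) {x : X | (R : ℝ) < ‖x‖})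
      rw [hmeasE k] at h2
      exact tsub_le_iff_right.mpr h2
    -- the coordinate observables
    set g : ℕ → X → ℝ≥0∞ := fun k x => (‖(x : ∀ _ : ℕ, 𝕂) (j + k)‖₊ : ℝ≥0∞) ^ q with hgdef
    have hgcont : ∀ k, Continuous (g k) :=
      fun k => ENNReal.continuous_rpow_const.comp
        (ENNReal.continuous_coe.comp (hcoordcont (j + k)).nnnorm)
    -- Chebyshev bound
    have hcheb : ∀ k, ENNReal.ofReal ((ε / b k) ^ q) * δ ≤ ∫⁻ x in K, g k x ∂m := by
      intro k
      calc ENNReal.ofReal ((ε / b k) ^ q) * δ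
          ≤ ENNReal.ofReal ((ε / b k) ^ q) * m (E k ∩ K) := mul_le_mul_right (hδle k) _
        _ = ∫⁻ _ in E k ∩ K, ENNReal.ofReal ((ε / b k) ^ q) ∂m := (setLIntegral_const _ _).symm
        _ ≤ ∫⁻ x in E k ∩ K, g k x ∂m := by
            refine setLIntegral_mono (hgcont k).measurable fun x hx => ?_
            have hlt : ε / b k ≤ ‖(x : ∀ _ : ℕ, 𝕂) (j + k)‖ := le_of_lt hx.1
            calc ENNReal.ofReal ((ε / b k) ^ q)
                = (ENNReal.ofReal (ε / b k)) ^ q :=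
                  (ENNReal.ofReal_rpow_of_nonneg (by positivity) hq0').symm
              _ ≤ (ENNReal.ofReal ‖(x : ∀ _ : ℕ, 𝕂) (j + k)‖) ^ q :=
                  ENNReal.rpow_le_rpow (ENNReal.ofReal_le_ofReal hlt) hq0'
              _ = g k x := congrArg (· ^ q) (ofReal_norm ((x : ∀ _ : ℕ, 𝕂) (j + k)))
        _ ≤ ∫⁻ x in K, g k x ∂m := lintegral_mono_set Set.inter_subset_right
    -- summing up
    have hsum_int : ∑' k : ℕ, ∫⁻ x in K, g k x ∂m ≤ ENNReal.ofReal ((R : ℝ) ^ q) := by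
      rw [← lintegral_tsum fun k => (hgcont k).measurable.aemeasurable]
      have hpt : ∀ x ∈ K, (∑' k : ℕ, g k x) ≤ ENNReal.ofReal ((R : ℝ) ^ q) := by
        intro x hx
        have hsummable : Summable fun n : ℕ => ‖(x : ∀ _ : ℕ, 𝕂) n‖ ^ q :=
          (lp.memℓp x).summable hq0
        have h1 : (∑' k : ℕ, g k x)
            ≤ ∑' n : ℕ, (‖(x : ∀ _ : ℕ, 𝕂) n‖₊ : ℝ≥0∞) ^ q :=
          ENNReal.tsum_comp_le_tsum_of_injective (add_right_injective j)
            fun n => (‖(x : ∀ _ : ℕ, 𝕂) n‖₊ : ℝ≥0∞) ^ q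
        have h2 : (∑' n : ℕ, (‖(x : ∀ _ : ℕ, 𝕂) n‖₊ : ℝ≥0∞) ^ q)
            = ENNReal.ofReal (‖x‖ ^ q) := by
          rw [lp.norm_rpow_eq_tsum hq0,
            ENNReal.ofReal_tsum_of_nonneg (fun n => by positivity) hsummable]
          congr 1
          funext n
          rw [← ENNReal.ofReal_rpow_of_nonneg (norm_nonneg _) hq0']
          exact (congrArg (· ^ q) (ofReal_norm ((x : ∀ _ : ℕ, 𝕂) n))).symm
        have h3 : ENNReal.ofReal (‖x‖ ^ q) ≤ ENNReal.ofReal ((R : ℝ) ^ q) :=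
          ENNReal.ofReal_le_ofReal (Real.rpow_le_rpow (norm_nonneg _) hx hq0')
        exact (h1.trans_eq h2).trans h3
      calc ∫⁻ x in K, (∑' k : ℕ, g k x) ∂m
          ≤ ∫⁻ _ in K, ENNReal.ofReal ((R : ℝ) ^ q) ∂m :=
            setLIntegral_mono measurable_const hpt
        _ = ENNReal.ofReal ((R : ℝ) ^ q) * m K := setLIntegral_const _ _
        _ ≤ ENNReal.ofReal ((R : ℝ) ^ q) * 1 := mul_le_mul_right prob_le_one _
        _ = ENNReal.ofReal ((R : ℝ) ^ q) := mul_one _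
    have htsum_fin : (∑' k : ℕ, ENNReal.ofReal ((ε / b k) ^ q)) ≠ ⊤ := by
      intro htop
      have h1 : (∑' k : ℕ, ENNReal.ofReal ((ε / b k) ^ q) * δ) ≤ ENNReal.ofReal ((R : ℝ) ^ q) :=
        (ENNReal.tsum_le_tsum hcheb).trans hsum_int
      rw [ENNReal.tsum_mul_right, htop, ENNReal.top_mul hδpos.ne'] at h1
      exact absurd h1 (by simp)
    have hsummable : Summable fun k : ℕ => (ε / b k) ^ q := by
      have := ENNReal.summable_toReal htsum_fin
      refine this.congr fun k => ?_
      rw [ENNReal.toReal_ofReal (by positivity)]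
    -- translate to the target series
    have hbsplit : ∀ k : ℕ,
        ‖∏ i ∈ Finset.Icc 1 j, w i‖ * b k = ‖∏ i ∈ Finset.Icc 1 (j + k), w i‖ := by
      intro k
      rw [hbdef]
      simp only
      rw [← norm_mul]
      congr 1
      rw [show (1 : ℕ) = 0 + 1 from rfl, icc_one_eq_ioc, icc_one_eq_ioc, icc_one_eq_ioc]
      exact Finset.prod_Ioc_consecutive w (Nat.zero_le j) (Nat.le_add_right j k)
    have hsum2 : Summable fun k : ℕ => 1 / ‖∏ i ∈ Finset.Icc 1 (j + k), w i‖ ^ q := by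
      refine (hsummable.mul_left (ε ^ q * ‖∏ i ∈ Finset.Icc 1 j, w i‖ ^ q)⁻¹).congr
        fun k => ?_
      have hbk := hbpos k
      have hβj := hβpos j
      have hβjk := hβpos (j + k)
      have hb_eq : b k = ‖∏ i ∈ Finset.Icc 1 (j + k), w i‖ / ‖∏ i ∈ Finset.Icc 1 j, w i‖ := by
        rw [eq_div_iff hβj.ne', mul_comm]
        exact hbsplit k
      have h1 : (0 : ℝ) < ε ^ q := Real.rpow_pos_of_pos hε q
      have h2 : (0 : ℝ) < ‖∏ i ∈ Finset.Icc 1 j, w i‖ ^ q := Real.rpow_pos_of_pos hβj q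
      have h3 : (0 : ℝ) < ‖∏ i ∈ Finset.Icc 1 (j + k), w i‖ ^ q := Real.rpow_pos_of_pos hβjk q
      rw [hb_eq, Real.div_rpow hε.le (div_nonneg hβjk.le hβj.le),
        Real.div_rpow hβjk.le hβj.le]
      have hAB : (0 : ℝ) < ε ^ q * ‖∏ i ∈ Finset.Icc 1 j, w i‖ ^ q := mul_pos h1 h2
      rw [div_div_eq_mul_div, div_eq_mul_inv, inv_mul_cancel_left₀ hAB.ne', one_div]
    -- shift indices to match the statement
    have hsum3 : Summable fun k : ℕ =>
        (1 : ℝ) / ‖∏ i ∈ Finset.Icc 1 ((k + j) + 1), w i‖ ^ q := by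
      have h4 : Summable fun k : ℕ => 1 / ‖∏ i ∈ Finset.Icc 1 (j + (k + 1)), w i‖ ^ q :=
        (summable_nat_add_iff 1).mpr hsum2
      refine h4.congr fun k => ?_
      rw [show j + (k + 1) = k + j + 1 by omega]
    exact (summable_nat_add_iff j).mp hsum3
  · -- easy direction: construct the fixed point
    intro hS
    set y : ∀ _ : ℕ, 𝕂 := fun n => (∏ i ∈ Finset.Icc 1 n, w i)⁻¹ with hydef
    have hynorm : ∀ n, ‖y n‖ ^ q = 1 / ‖∏ i ∈ Finset.Icc 1 n, w i‖ ^ q := by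
      intro n
      rw [hydef]
      simp only
      rw [norm_inv, Real.inv_rpow (norm_nonneg _), one_div]
    have hsum : Summable fun n => ‖y n‖ ^ q := by
      rw [← summable_nat_add_iff 1]
      refine hS.congr fun n => ?_
      rw [hynorm (n + 1)]
    have hmem : Memℓp y p := memℓp_gen hsum
    set x : X := ⟨y, hmem⟩ with hxdef
    have hx0 : (x : ∀ _ : ℕ, 𝕂) 0 = 1 := by
      show y 0 = 1
      rw [hydef]
      simp [Finset.Icc_eq_empty (show ¬ (1 : ℕ) ≤ 0 by omega)]
    have hxne : x ≠ 0 := by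
      intro h
      have h0 : (x : ∀ _ : ℕ, 𝕂) 0 = 0 := by
        rw [h]; simp
      rw [hx0] at h0
      exact one_ne_zero h0
    have hBx : B x = x := by
      apply lp.ext
      funext n
      rw [hB x n]
      show w (n + 1) * y (n + 1) = y n
      rw [hydef]
      simp only
      rw [Finset.prod_Icc_succ_top (show (1 : ℕ) ≤ n + 1 by omega), mul_inv,
        ← mul_assoc, mul_comm (w (n + 1)), mul_assoc,
        mul_inv_cancel₀ (hw0 (n + 1) (by omega)), mul_one]
    refine ⟨Measure.dirac x, inferInstance, ?_, ?_⟩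
    · intro A hA
      rw [Measure.dirac_apply' _ (hBmeas hA), Measure.dirac_apply' _ hA]
      simp only [Set.indicator_apply, Set.mem_preimage, hBx]
    · intro h
      have hms : MeasurableSet ({x} : Set X) := isClosed_singleton.measurableSet
      have h1 : Measure.dirac x ({x} : Set X) = Measure.dirac (0 : X) ({x} : Set X) := by
        rw [h]
      rw [Measure.dirac_apply' _ hms, Measure.dirac_apply' _ hms,
        Set.indicator_of_mem (Set.mem_singleton x), Set.indicator_of_notMem
          (fun hh => hxne (Set.eq_of_mem_singleton hh).symm)] at h1
      simp at h1
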